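/- Let H be a bounded Hankel operator on H², u = H𝟙, s > 0, and let E = {f ∈ H² : H(Hf) = s²·f}. Suppose there exists h ∈ E with ⟨h, 𝟙⟩ ≠ 0. Then for every f ∈ E with ⟨f, 𝟙⟩ = 0 one has S*f ∈ E and ⟨S*f, u⟩ = 0; in particular S*(E ∩ 𝟙^⊥) ⊆ E ∩ u^⊥. -/

import Mathlib

open MeasureTheory Complex Filter

noncomputable section

namespace HankelSchmidt

instance fact_two_pi_pos : Fact (0 < 2 * Real.pi) := ⟨Real.two_pi_pos⟩

/-- The circle `𝕋`, realized as `ℝ / 2πℤ`. -/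
abbrev Tc : Type := AddCircle (2 * Real.pi)

/-- Normalized arc-length (Haar) measure on the circle. -/
abbrev muc : Measure Tc := AddCircle.haarAddCircle

/-- The space `L²(𝕋)`. -/
abbrev Ltwo := Lp ℂ 2 muc

/-- The Hardy space `H²`: the subspace of `L²(𝕋)` of functions whose Fourier coefficients
of negative index vanish. -/
def Hardy : Submodule ℂ Ltwo where
  carrier := {f | ∀ n : ℤ, n < 0 → fourierBasis.repr f n = 0}
  add_mem' := by
    intro a b ha hb n hn
    simp [map_add, lp.coeFn_add, ha n hn, hb n hn]
  zero_mem' := by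
    intro n hn
    simp
  smul_mem' := by
    intro c a ha n hn
    simp [_root_.map_smul, lp.coeFn_smul, ha n hn]

theorem hardy_isClosed : IsClosed (Hardy : Set Ltwo) := by
  have hset : (Hardy : Set Ltwo) =
      ⋂ (n : ℤ) (_ : n < 0), {f : Ltwo | fourierBasis.repr f n = 0} := by
    ext f
    simp only [Set.mem_iInter, Set.mem_setOf_eq]
    rfl
  rw [hset]
  refine isClosed_iInter fun n => isClosed_iInter fun hn => ?_
  have hcont : Continuous fun f : Ltwo => fourierBasis.repr f n := by
    have h1 : Continuous fun g : lp (fun _ : ℤ => ℂ) 2 => g n :=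
      (continuous_apply n).comp lp.uniformContinuous_coe.continuous
    exact h1.comp fourierBasis.repr.continuous
  exact isClosed_eq hcont continuous_const

instance : CompleteSpace (Hardy : Submodule ℂ Ltwo) := hardy_isClosed.completeSpace_coe

/-- The Hardy space as a type. -/
abbrev Hd := (Hardy : Submodule ℂ Ltwo)

/-- The orthogonal projection `P : L²(𝕋) → H²`. -/
def P2 : Ltwo → Hd := fun f => Hardy.orthogonalProjectionOnto f

/-- The orthogonal projection `P`, viewed as a map `L²(𝕋) → L²(𝕋)` with range `H²`. -/
def PL : Ltwo → Ltwo := fun f => ((P2 f : Hd) : Ltwo)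

theorem fourierCoeff_congr_ae {f g : Tc → ℂ} (h : f =ᵐ[muc] g) (n : ℤ) :
    fourierCoeff f n = fourierCoeff g n :=
  integral_congr_ae (h.mono fun x hx => by dsimp only; rw [hx])

theorem mem_Hardy_iff {f : Ltwo} :
    f ∈ Hardy ↔ ∀ n : ℤ, n < 0 → fourierCoeff (f : Tc → ℂ) n = 0 := by
  constructor
  · intro hf n hn; rw [← fourierBasis_repr]; exact hf n hn
  · intro hf n hn; rw [fourierBasis_repr]; exact hf n hn

/-- Pointwise multiplication by a bounded measurable function preserves `L²`. -/
theorem memLp_mul_of_bounded {g : Tc → ℂ} (hg : AEStronglyMeasurable g muc) {C : ℝ}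
    (hb : ∀ᵐ x ∂muc, ‖g x‖ ≤ C) (f : Ltwo) :
    MemLp (fun x => g x * (f : Tc → ℂ) x) 2 muc := by
  refine MemLp.of_le_mul (c := C) (Lp.memLp f) (hg.mul (Lp.aestronglyMeasurable f)) ?_
  filter_upwards [hb] with x hx
  rw [norm_mul]
  exact mul_le_mul_of_nonneg_right hx (norm_nonneg _)

theorem fourier_abs (n : ℤ) (x : Tc) : ‖fourier n x‖ = 1 := by
  rw [fourier_apply]; exact Circle.norm_coe _

theorem fourier_norm_one (n : ℤ) (x : Tc) : ‖fourier n x‖ ≤ 1 :=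
  le_of_eq (fourier_abs n x)

/-- Multiplication of an `L²` function by the monomial `z^n`. -/
def mulF (n : ℤ) (f : Ltwo) : Ltwo :=
  (memLp_mul_of_bounded ((map_continuous (fourier n)).aestronglyMeasurable)
    (Eventually.of_forall (fourier_norm_one n)) f).toLp _

theorem mulF_coe (n : ℤ) (f : Ltwo) :
    (mulF n f : Tc → ℂ) =ᵐ[muc] fun x => fourier n x * (f : Tc → ℂ) x :=
  MemLp.coeFn_toLp _

theorem fourierCoeff_fourier_mul (f : Tc → ℂ) (m n : ℤ) :
    fourierCoeff (fun x => fourier m x * f x) n = fourierCoeff f (n - m) := by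
  unfold fourierCoeff
  refine integral_congr_ae (Eventually.of_forall fun x => ?_)
  have h : @fourier (2 * Real.pi) (-(n - m)) x = fourier (-n) x * fourier m x := by
    rw [show -(n - m) = -n + m by ring, fourier_add]
  simp only [smul_eq_mul, h]
  ring

/-- The shift operator `S : H² → H²`, `(Sf)(z) = z·f(z)`. -/
def Sop (f : Hd) : Hd :=
  ⟨mulF 1 (f : Ltwo), by
    rw [mem_Hardy_iff]
    intro n hn
    rw [fourierCoeff_congr_ae (mulF_coe 1 (f : Ltwo)) n, fourierCoeff_fourier_mul]
    exact (mem_Hardy_iff.mp f.2) (n - 1) (by omega)⟩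

/-- The adjoint shift `S* : H² → H²`, `S*f = P(z̄·f)`. -/
def SstarOp (f : Hd) : Hd := P2 (mulF (-1) (f : Ltwo))

/-- The constant function `𝟙 ∈ H²`. -/
def oneH : Hd :=
  ⟨fourierLp 2 0, by
    rw [mem_Hardy_iff]
    intro n hn
    rw [← fourierBasis_repr]
    have h1 : (fourierLp (T := 2 * Real.pi) 2 0) = fourierBasis 0 := by
      rw [coe_fourierBasis]
    rw [h1, HilbertBasis.repr_self, lp.single_apply]
    simp [Pi.single_apply, show n ≠ 0 by omega]⟩

/-- The inner product on `H²`, linear in the FIRST argument (the paper's convention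
`⟨f, g⟩ = ∫ f ḡ`). -/
def ipH (f g : Hd) : ℂ := @inner ℂ Ltwo _ (g : Ltwo) (f : Ltwo)

/-- The inner product on `L²(𝕋)`, linear in the FIRST argument. -/
def ipL (f g : Ltwo) : ℂ := @inner ℂ Ltwo _ g f

/-- `θ ∈ H²` is an inner function if `|θ(z)| = 1` a.e. on `𝕋`. -/
def IsInnerFn (θ : Hd) : Prop := ∀ᵐ x ∂muc, ‖(((θ : Ltwo) : Tc → ℂ) x)‖ = 1

/-- The set `θ·H² ⊆ L²(𝕋)` of pointwise a.e. products `θ·f`, `f ∈ H²`. -/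
def thetaHardy (θ : Hd) : Set Ltwo :=
  {g : Ltwo | ∃ f : Hd, (g : Tc → ℂ) =ᵐ[muc]
    fun x => ((θ : Ltwo) : Tc → ℂ) x * ((f : Ltwo) : Tc → ℂ) x}

/-- The model space `K_θ = H² ∩ (θH²)^⊥`, as a subset of `L²(𝕋)`. -/
def KspaceL (θ : Hd) : Set Ltwo :=
  {h : Ltwo | h ∈ Hardy ∧ ∀ g ∈ thetaHardy θ, ipL h g = 0}

/-- The model space `K_θ`, as a subset of `H²`. -/
def Kspace (θ : Hd) : Set Hd := {h : Hd | (h : Ltwo) ∈ KspaceL θ}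

/-- `p` is an isometric multiplier on `K_θ`: `p` is measurable and, for every `h ∈ K_θ`,
the pointwise product `p·h` lies in `H²` and has the same norm as `h`. -/
def IsIsomMult (p : Tc → ℂ) (θ : Hd) : Prop :=
  Measurable p ∧ ∀ h ∈ Kspace θ, ∃ g : Hd,
    ((g : Ltwo) : Tc → ℂ) =ᵐ[muc] (fun x => p x * ((h : Ltwo) : Tc → ℂ) x) ∧
    ‖(g : Ltwo)‖ = ‖(h : Ltwo)‖

/-- The subspace `p·K_θ = {p·h : h ∈ K_θ}` of `H²`. -/
def wModel (p : Tc → ℂ) (θ : Hd) : Set Hd :=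
  {g : Hd | ∃ h ∈ Kspace θ, ((g : Ltwo) : Tc → ℂ) =ᵐ[muc]
    fun x => p x * ((h : Ltwo) : Tc → ℂ) x}

/-- A bounded Hankel operator on `H²`: a continuous antilinear map `H : H² → H²`
satisfying `S*H = HS`. -/
def IsHankelOp (H : Hd →L⋆[ℂ] Hd) : Prop := ∀ f : Hd, SstarOp (H f) = H (Sop f)

/-- A bounded measurable symbol on the circle (an `L^∞` function). -/
def IsBddFn (u : Tc → ℂ) : Prop := Measurable u ∧ ∃ C : ℝ, ∀ᵐ x ∂muc, ‖u x‖ ≤ C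

theorem memLp_mul_conj {u : Tc → ℂ} (hu : IsBddFn u) (f : Ltwo) :
    MemLp (fun x => u x * (starRingEnd ℂ) ((f : Tc → ℂ) x)) 2 muc := by
  obtain ⟨hmeas, C, hC⟩ := hu
  refine MemLp.of_le_mul (c := C) (Lp.memLp f)
    (hmeas.aestronglyMeasurable.mul
      (continuous_star.comp_aestronglyMeasurable (Lp.aestronglyMeasurable f))) ?_
  filter_upwards [hC] with x hx
  rw [norm_mul, RCLike.norm_conj]
  exact mul_le_mul_of_nonneg_right hx (norm_nonneg _)

/-- The Hankel operator with symbol `u`: `H_u f = P(u·f̄)`, defined on all of `L²(𝕋)`. -/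
def hankelL (u : Tc → ℂ) (hu : IsBddFn u) : Ltwo → Ltwo :=
  fun f => PL ((memLp_mul_conj hu f).toLp _)

/-- The Möbius transformation `μ(z) = (α − z)/(1 − ᾱz)` of the unit disk. -/
def mobius (α z : ℂ) : ℂ := (α - z) / (1 - (starRingEnd ℂ) α * z)

/-- The point `e^{ix} ∈ ℂ` corresponding to `x ∈ 𝕋`. -/
def circlePt (x : Tc) : ℂ := fourier 1 x

/-- The Möbius transformation `μ` viewed as a self-map of `𝕋`. -/
def mobiusT (α : ℂ) (x : Tc) : Tc := ((Complex.arg (mobius α (circlePt x)) : ℝ) : Tc)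

/-- The weight `√(1 − |α|²)/(1 − ᾱz)` in the definition of `U_μ`. -/
def umuWeight (α : ℂ) (x : Tc) : ℂ :=
  (Real.sqrt (1 - ‖α‖ ^ 2) : ℂ) / (1 - (starRingEnd ℂ) α * circlePt x)

/-- `U` is the operator `U_μ`: `(U_μ f)(z) = (√(1 − |α|²)/(1 − ᾱz))·f(μ(z))` a.e. -/
def IsUmu (α : ℂ) (U : Ltwo → Ltwo) : Prop :=
  ∀ f : Ltwo, ((U f : Ltwo) : Tc → ℂ) =ᵐ[muc]
    fun x => umuWeight α x * (f : Tc → ℂ) (mobiusT α x)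


/-! ### Auxiliary lemmas -/

/-- Fourier coefficient of an `L²` element. -/
def cf (f : Ltwo) (n : ℤ) : ℂ := fourierBasis.repr f n

theorem cf_eq_fourierCoeff (f : Ltwo) (n : ℤ) : cf f n = fourierCoeff (f : Tc → ℂ) n :=
  fourierBasis_repr f n

theorem cf_ext {f g : Ltwo} (h : ∀ n, cf f n = cf g n) : f = g := by
  apply fourierBasis.repr.injective
  apply lp.ext
  funext n
  exact h n

theorem cf_inner (f : Ltwo) (n : ℤ) : cf f n = @inner ℂ Ltwo _ (fourierBasis n : Ltwo) f :=
  fourierBasis.repr_apply_apply f n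

theorem cf_add (f g : Ltwo) (n : ℤ) : cf (f + g) n = cf f n + cf g n := by
  simp [cf, map_add, lp.coeFn_add]

theorem cf_smul (c : ℂ) (f : Ltwo) (n : ℤ) : cf (c • f) n = c * cf f n := by
  simp [cf, _root_.map_smul, lp.coeFn_smul]

theorem cf_sub (f g : Ltwo) (n : ℤ) : cf (f - g) n = cf f n - cf g n := by
  simp [cf, map_sub, lp.coeFn_sub]

theorem fourierBasis_mem_Hardy {n : ℤ} (hn : 0 ≤ n) : (fourierBasis n : Ltwo) ∈ Hardy := by
  intro m hm
  rw [HilbertBasis.repr_self, lp.single_apply, Pi.single_apply, if_neg (by omega : m ≠ n)]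

theorem cf_mulF (m : ℤ) (f : Ltwo) (n : ℤ) : cf (mulF m f) n = cf f (n - m) := by
  rw [cf_eq_fourierCoeff, cf_eq_fourierCoeff,
    fourierCoeff_congr_ae (mulF_coe m f) n, fourierCoeff_fourier_mul]

theorem cf_PL_of_nonneg (v : Ltwo) {n : ℤ} (hn : 0 ≤ n) : cf (PL v) n = cf v n := by
  have h0 := Submodule.starProjection_inner_eq_zero (K := Hardy) v (fourierBasis n)
    (fourierBasis_mem_Hardy hn)
  have h1 : @inner ℂ Ltwo _ ((fourierBasis n : Ltwo)) (v - PL v) = 0 :=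
    inner_eq_zero_symm.mp h0
  rw [inner_sub_right] at h1
  rw [cf_inner, cf_inner]
  exact (sub_eq_zero.mp h1).symm

theorem cf_PL_of_neg (v : Ltwo) {n : ℤ} (hn : n < 0) : cf (PL v) n = 0 :=
  (P2 v).2 n hn

theorem cf_Hd_of_neg (f : Hd) {n : ℤ} (hn : n < 0) : cf (f : Ltwo) n = 0 :=
  f.2 n hn

theorem cf_Sop (f : Hd) (n : ℤ) : cf ((Sop f : Hd) : Ltwo) n = cf (f : Ltwo) (n - 1) :=
  cf_mulF 1 (f : Ltwo) n

theorem cf_Sstar (f : Hd) (n : ℤ) :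
    cf ((SstarOp f : Hd) : Ltwo) n = if 0 ≤ n then cf (f : Ltwo) (n + 1) else 0 := by
  by_cases hn : 0 ≤ n
  · rw [if_pos hn]
    have h : cf ((SstarOp f : Hd) : Ltwo) n = cf (mulF (-1) (f : Ltwo)) n :=
      cf_PL_of_nonneg _ hn
    rw [h, cf_mulF]
    norm_num
  · rw [if_neg hn]
    exact (SstarOp f).2 n (by omega)

theorem oneH_coe : ((oneH : Hd) : Ltwo) = fourierBasis 0 := by
  show fourierLp 2 0 = fourierBasis 0
  rw [coe_fourierBasis]

theorem cf_oneH (n : ℤ) : cf ((oneH : Hd) : Ltwo) n = if n = 0 then 1 else 0 := by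
  rw [oneH_coe]
  unfold cf
  rw [HilbertBasis.repr_self, lp.single_apply]
  by_cases h : n = 0
  · simp [h, Pi.single_apply]
  · simp [h, Pi.single_apply]

theorem ipH_oneH (f : Hd) : ipH f oneH = cf (f : Ltwo) 0 := by
  rw [cf_inner]
  show @inner ℂ Ltwo _ ((oneH : Hd) : Ltwo) (f : Ltwo) = _
  rw [oneH_coe]
theorem Sop_Sstar (f : Hd) : Sop (SstarOp f) = f - (cf (f : Ltwo) 0) • oneH := by
  apply Subtype.ext
  apply cf_ext
  intro n
  have hR : ((f - (cf (f : Ltwo) 0) • oneH : Hd) : Ltwo)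
      = (f : Ltwo) - (cf (f : Ltwo) 0) • ((oneH : Hd) : Ltwo) := rfl
  rw [hR, cf_sub, cf_smul, cf_oneH, cf_Sop, cf_Sstar]
  by_cases h1 : 0 ≤ n - 1
  · rw [if_pos h1, if_neg (by omega : ¬ n = 0)]
    norm_num
  · rw [if_neg h1]
    by_cases h2 : n = 0
    · simp [h2]
    · rw [if_neg h2]
      rw [cf_Hd_of_neg f (by omega : n < 0)]
      ring

theorem SstarOp_smul (c : ℂ) (f : Hd) : SstarOp (c • f) = c • SstarOp f := by
  apply Subtype.ext
  apply cf_ext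
  intro n
  have hR : ((c • SstarOp f : Hd) : Ltwo) = c • ((SstarOp f : Hd) : Ltwo) := rfl
  have hL : ((c • f : Hd) : Ltwo) = c • (f : Ltwo) := rfl
  rw [hR, cf_smul, cf_Sstar, cf_Sstar, hL, cf_smul]
  split <;> simp

theorem inner_mulF_left (g f : Ltwo) :
    @inner ℂ Ltwo _ (mulF (-1) g) f = @inner ℂ Ltwo _ g (mulF 1 f) := by
  rw [MeasureTheory.L2.inner_def, MeasureTheory.L2.inner_def]
  apply integral_congr_ae
  filter_upwards [mulF_coe (-1) g, mulF_coe 1 f] with x h1 h2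
  rw [h1, h2]
  simp only [RCLike.inner_apply]
  rw [show ((-1 : ℤ)) = -(1 : ℤ) from rfl, fourier_neg, map_mul, Complex.conj_conj]
  ring

theorem ipH_Sop (x y : Hd) : ipH (Sop x) y = ipH x (SstarOp y) := by
  show @inner ℂ Ltwo _ (y : Ltwo) (mulF 1 (x : Ltwo))
      = @inner ℂ Ltwo _ (PL (mulF (-1) (y : Ltwo))) (x : Ltwo)
  have h0 := Submodule.starProjection_inner_eq_zero (K := Hardy) (mulF (-1) (y : Ltwo))
    (x : Ltwo) x.2
  rw [inner_sub_left] at h0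
  have h1 : @inner ℂ Ltwo _ (PL (mulF (-1) (y : Ltwo))) (x : Ltwo)
      = @inner ℂ Ltwo _ (mulF (-1) (y : Ltwo)) (x : Ltwo) := (sub_eq_zero.mp h0).symm
  rw [h1, inner_mulF_left]

theorem ipH_conj (f g : Hd) : ipH f g = starRingEnd ℂ (ipH g f) :=
  (inner_conj_symm _ _).symm

theorem ipH_Sop' (x y : Hd) : ipH x (Sop y) = ipH (SstarOp x) y := by
  rw [ipH_conj, ipH_Sop, ← ipH_conj]

theorem ipH_add_left (f g k : Hd) : ipH (f + g) k = ipH f k + ipH g k := by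
  show @inner ℂ Ltwo _ _ ((f : Ltwo) + (g : Ltwo)) = _
  rw [inner_add_right]; rfl

theorem ipH_smul_left (c : ℂ) (f k : Hd) : ipH (c • f) k = c * ipH f k := by
  show @inner ℂ Ltwo _ _ (c • (f : Ltwo)) = _
  rw [inner_smul_right]; rfl

theorem ipH_eq_inner (f g : Hd) : ipH f g = @inner ℂ Hd _ g f :=
  (Submodule.coe_inner _ _ _).symm
/-- The monomials `eₙ = Sⁿ𝟙`. -/
def en (n : ℕ) : Hd := Sop^[n] oneH

theorem en_succ (n : ℕ) : en (n + 1) = Sop (en n) :=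
  Function.iterate_succ_apply' _ _ _

theorem cf_en (n : ℕ) : ∀ k : ℤ, cf ((en n : Hd) : Ltwo) k = if k = (n : ℤ) then 1 else 0 := by
  induction n with
  | zero => intro k; simpa [en] using cf_oneH k
  | succ n ih =>
    intro k
    rw [en_succ, cf_Sop, ih (k - 1)]
    have h : (k - 1 = (n : ℤ)) ↔ (k = ((n + 1 : ℕ) : ℤ)) := by push_cast; omega
    simp [h]

theorem en_coe (n : ℕ) : ((en n : Hd) : Ltwo) = fourierBasis (n : ℤ) := by
  apply cf_ext
  intro k
  rw [cf_en]
  unfold cf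
  rw [HilbertBasis.repr_self, lp.single_apply]
  by_cases h : k = (n : ℤ)
  · simp [h, Pi.single_apply]
  · simp [h, Pi.single_apply]

theorem dense_en : Dense ((Submodule.span ℂ (Set.range en) : Submodule ℂ Hd) : Set Hd) := by
  have htop : (Submodule.span ℂ (Set.range en)).topologicalClosure = ⊤ := by
    rw [Submodule.topologicalClosure_eq_top_iff, Submodule.eq_bot_iff]
    intro x hx
    have hc : ∀ n : ℕ, cf (x : Ltwo) (n : ℤ) = 0 := by
      intro n
      have h1 := (Submodule.mem_orthogonal _ x).mp hx (en n)
        (Submodule.subset_span ⟨n, rfl⟩)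
      rw [cf_inner, ← en_coe]
      rw [Submodule.coe_inner] at h1
      exact h1
    have hz : (x : Ltwo) = 0 := by
      apply cf_ext
      intro n
      have h0 : cf (0 : Ltwo) n = 0 := by simp [cf]
      rw [h0]
      rcases lt_or_ge n 0 with hn | hn
      · exact cf_Hd_of_neg x hn
      · have := hc n.toNat
        rwa [Int.toNat_of_nonneg hn] at this
    exact Submodule.coe_eq_zero.mp hz
  have := congrArg (fun K : Submodule ℂ Hd => (K : Set Hd)) htop
  simp only [Submodule.topologicalClosure_coe, Submodule.top_coe] at this
  rw [dense_iff_closure_eq]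
  exact this

theorem ipH_H_move (H : Hd →L⋆[ℂ] Hd) (hH : IsHankelOp H) :
    ∀ (n : ℕ) (x : Hd), ipH (H x) (en n) = ipH (H (Sop^[n] x)) oneH := by
  intro n
  induction n with
  | zero => intro x; rfl
  | succ n ih =>
    intro x
    rw [en_succ, ipH_Sop', hH x, ih (Sop x), ← Function.iterate_succ_apply]

theorem sym_en (H : Hd →L⋆[ℂ] Hd) (hH : IsHankelOp H) (m n : ℕ) :
    ipH (H (en m)) (en n) = ipH (H (en n)) (en m) := by
  rw [ipH_H_move H hH, ipH_H_move H hH]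
  have h1 : Sop^[n] (en m) = en (n + m) := (Function.iterate_add_apply _ _ _ _).symm
  have h2 : Sop^[m] (en n) = en (m + n) := (Function.iterate_add_apply _ _ _ _).symm
  rw [h1, h2, Nat.add_comm]

theorem ipH_zero_left (k : Hd) : ipH 0 k = 0 := by
  show @inner ℂ Ltwo _ _ ((0 : Hd) : Ltwo) = 0
  rw [Submodule.coe_zero, inner_zero_right]

theorem ipH_zero_right (f : Hd) : ipH f 0 = 0 := by
  show @inner ℂ Ltwo _ ((0 : Hd) : Ltwo) _ = 0
  rw [Submodule.coe_zero, inner_zero_left]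

theorem ipH_add_right (f g k : Hd) : ipH k (f + g) = ipH k f + ipH k g := by
  show @inner ℂ Ltwo _ ((f : Ltwo) + (g : Ltwo)) _ = _
  rw [inner_add_left]; rfl

theorem ipH_smul_right (c : ℂ) (f k : Hd) : ipH k (c • f) = starRingEnd ℂ c * ipH k f := by
  show @inner ℂ Ltwo _ (c • (f : Ltwo)) _ = _
  rw [inner_smul_left]; rfl

theorem sym_all (H : Hd →L⋆[ℂ] Hd) (hH : IsHankelOp H) (x y : Hd) :
    ipH (H x) y = ipH (H y) x := by
  have hsmul : ∀ (c : ℂ) (a : Hd), H (c • a) = starRingEnd ℂ c • H a := fun c a =>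
    ContinuousLinearMap.map_smulₛₗ H c a
  have h1 : ∀ b ∈ Submodule.span ℂ (Set.range en), ∀ m : ℕ,
      ipH (H (en m)) b = ipH (H b) (en m) := by
    intro b hb
    induction hb using Submodule.span_induction with
    | mem b hb =>
      intro m
      obtain ⟨n, rfl⟩ := hb
      exact sym_en H hH m n
    | zero => intro m; rw [map_zero, ipH_zero_left, ipH_zero_right]
    | add b b' _ _ ih ih' =>
      intro m
      rw [ipH_add_right, ih m, ih' m, map_add, ipH_add_left]
    | smul c b _ ih =>
      intro m
      rw [ipH_smul_right, ih m, hsmul, ipH_smul_left]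
  have h2 : ∀ a ∈ Submodule.span ℂ (Set.range en), ∀ b ∈ Submodule.span ℂ (Set.range en),
      ipH (H a) b = ipH (H b) a := by
    intro a ha
    induction ha using Submodule.span_induction with
    | mem a ha =>
      intro b hb
      obtain ⟨m, rfl⟩ := ha
      exact h1 b hb m
    | zero => intro b hb; rw [map_zero, ipH_zero_left, ipH_zero_right]
    | add a a' _ _ ih ih' =>
      intro b hb
      rw [map_add, ipH_add_left, ih b hb, ih' b hb, ipH_add_right]
    | smul c a _ ih =>
      intro b hb
      rw [hsmul, ipH_smul_left, ih b hb, ipH_smul_right]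
  have hA : ∀ y ∈ Submodule.span ℂ (Set.range en), ∀ x : Hd,
      ipH (H x) y = ipH (H y) x := by
    intro y hy
    have c1 : Continuous fun x : Hd => ipH (H x) y := by
      simp only [ipH_eq_inner]
      exact Continuous.inner continuous_const H.continuous
    have c2 : Continuous fun x : Hd => ipH (H y) x := by
      simp only [ipH_eq_inner]
      exact Continuous.inner (𝕜 := ℂ) (α := Hd) continuous_id continuous_const
    have := Continuous.ext_on dense_en c1 c2 (fun a ha => h2 a ha y hy)
    exact fun x => congrFun this x
  have c1 : Continuous fun y : Hd => ipH (H x) y := by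
    simp only [ipH_eq_inner]
    exact Continuous.inner (𝕜 := ℂ) (α := Hd) continuous_id continuous_const
  have c2 : Continuous fun y : Hd => ipH (H y) x := by
    simp only [ipH_eq_inner]
    exact Continuous.inner continuous_const H.continuous
  have := Continuous.ext_on dense_en c1 c2 (fun b hb => hA b hb x)
  exact congrFun this y
/-- If some element of the Schmidt subspace `E = E_H(s)` is not orthogonal to `𝟙`, then
`S*(E ∩ 𝟙^⊥) ⊆ E ∩ u^⊥`, where `u = H𝟙`. -/
theorem sstar_schmidt_inclusion
    (H : Hd →L⋆[ℂ] Hd) (hH : IsHankelOp H) (s : ℝ) (hs : 0 < s)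
    (h : Hd) (hhE : H (H h) = ((s : ℂ) ^ 2) • h) (hh1 : ipH h oneH ≠ 0) :
    (∀ f : Hd, H (H f) = ((s : ℂ) ^ 2) • f → ipH f oneH = 0 →
      H (H (SstarOp f)) = ((s : ℂ) ^ 2) • SstarOp f ∧ ipH (SstarOp f) (H oneH) = 0) ∧
    SstarOp '' {f : Hd | H (H f) = ((s : ℂ) ^ 2) • f ∧ ipH f oneH = 0} ⊆
      {f : Hd | H (H f) = ((s : ℂ) ^ 2) • f ∧ ipH f (H oneH) = 0} := by
  have hsym := sym_all H hH
  have hsmul : ∀ (c : ℂ) (a : Hd), H (c • a) = starRingEnd ℂ c • H a := fun c a =>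
    ContinuousLinearMap.map_smulₛₗ H c a
  have hconjs : starRingEnd ℂ ((s : ℂ) ^ 2) = (s : ℂ) ^ 2 := by
    rw [map_pow, Complex.conj_ofReal]
  have key : ∀ f : Hd, H (H f) = ((s : ℂ) ^ 2) • f → ipH f oneH = 0 →
      H (H (SstarOp f)) = ((s : ℂ) ^ 2) • SstarOp f ∧ ipH (SstarOp f) (H oneH) = 0 := by
    intro f hfE hf0
    set g := SstarOp f with hg
    have hSg : Sop g = f := by
      rw [hg, Sop_Sstar, show cf (f : Ltwo) 0 = 0 from by rw [← ipH_oneH]; exact hf0]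
      simp
    set c := ipH (H g) oneH with hc
    have hHg : H g = Sop (H f) + c • oneH := by
      have h2 : Sop (SstarOp (H g)) = H g - cf ((H g : Hd) : Ltwo) 0 • oneH := Sop_Sstar (H g)
      rw [hH g, hSg, ← ipH_oneH, ← hc] at h2
      exact (eq_sub_iff_add_eq.mp h2).symm
    have hHHg : H (H g) = ((s : ℂ) ^ 2) • g + (starRingEnd ℂ c) • H oneH := by
      rw [hHg, map_add, hsmul]
      congr 1
      rw [← hH (H f), hfE, SstarOp_smul]
    have hhE' : H (H (H h)) = ((s : ℂ) ^ 2) • (H h) := by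
      rw [hhE, hsmul, hconjs]
    have hpair : ipH (H (H g)) (H h) = starRingEnd ℂ (ipH (H (H (H h))) g) := by
      rw [hsym (H g) (H h), hsym (H (H h)) g]
      exact ipH_conj _ _
    have hc0 : starRingEnd ℂ c * ipH (H oneH) (H h) = 0 := by
      have h1 : ipH (H (H g)) (H h)
          = ((s : ℂ) ^ 2) * ipH g (H h) + starRingEnd ℂ c * ipH (H oneH) (H h) := by
        rw [hHHg, ipH_add_left, ipH_smul_left, ipH_smul_left]
      have h2 : starRingEnd ℂ (ipH (H (H (H h))) g) = ((s : ℂ) ^ 2) * ipH g (H h) := by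
        rw [hhE', ipH_smul_left, map_mul, hconjs, ← ipH_conj]
      have h3 := hpair
      rw [h1, h2] at h3
      exact add_eq_left.mp h3
    have hu : ipH (H oneH) (H h) ≠ 0 := by
      rw [hsym oneH (H h), hhE, ipH_smul_left]
      exact mul_ne_zero (pow_ne_zero 2 (Complex.ofReal_ne_zero.mpr hs.ne')) hh1
    have hcz : c = 0 := by
      rcases mul_eq_zero.mp hc0 with h' | h'
      · simpa using congrArg (starRingEnd ℂ) h'
      · exact absurd h' hu
    constructor
    · rw [hHHg, hcz, map_zero, zero_smul, add_zero]
    · rw [show ipH g (H oneH) = starRingEnd ℂ (ipH (H oneH) g) from ipH_conj _ _,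
        hsym oneH g, ← hc, hcz, map_zero]
  refine ⟨key, ?_⟩
  rintro x ⟨f, ⟨hf1, hf2⟩, rfl⟩
  exact key f hf1 hf2
end HankelSchmidt
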